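/- Let τ > 0, μ > 0, C > 0, let g : ℝ → ℝ be continuous with g(t) ≥ 0 and ∫_0^t g(s) ds ≤ C·t for all t ≥ 0, and let k : ℝ → ℝ be differentiable and satisfy k'(t) = −((√2/2)·τ⁻¹ − τ·g(t))·k(t) for all t ≥ 0. If τ² < √2/(2C), then δ := (√2/2)·τ⁻¹ − τ·C > 0 and |k(t)| ≤ |k(0)|·exp(−δ·t) for all t ≥ 0; in particular k(t) → 0 and the eddy viscosity ν_T(t) := √2·μ·τ·k(t) → 0 exponentially as t → ∞. -/

import Mathlib

open Filter

/-- Proposition 2.1 (model convergence to NSE): if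
`k' = -((√2/2)τ⁻¹ - τ g(t)) k` with `g ≥ 0` continuous, `∫_0^t g ≤ C t`, and
`τ² < √2/(2C)`, then `δ := (√2/2)τ⁻¹ - τ C > 0`, `|k t| ≤ |k 0| exp(-δ t)`,
and both `k` and the eddy viscosity `ν_T = √2 μ τ k` tend to `0`. -/
theorem half_equation_model_convergence_to_NSE
    (τ μ C : ℝ) (hτ : 0 < τ) (hμ : 0 < μ) (hC : 0 < C)
    (g k : ℝ → ℝ)
    (hg : Continuous g)
    (hgnonneg : ∀ t, 0 ≤ t → 0 ≤ g t)
    (hgint : ∀ t, 0 ≤ t → (∫ s in (0:ℝ)..t, g s) ≤ C * t)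
    (hk : Differentiable ℝ k)
    (hode : ∀ t, 0 ≤ t →
      deriv k t = -((Real.sqrt 2 / 2) * τ⁻¹ - τ * g t) * k t)
    (hτsmall : τ ^ 2 < Real.sqrt 2 / (2 * C)) :
    0 < (Real.sqrt 2 / 2) * τ⁻¹ - τ * C ∧
    (∀ t, 0 ≤ t →
      |k t| ≤ |k 0| * Real.exp (-((Real.sqrt 2 / 2) * τ⁻¹ - τ * C) * t)) ∧
    Tendsto k atTop (nhds 0) ∧
    Tendsto (fun t => Real.sqrt 2 * μ * τ * k t) atTop (nhds 0) := by
  set a : ℝ := Real.sqrt 2 / 2 * τ⁻¹ with ha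
  set δ : ℝ := a - τ * C with hδ
  have hsqrt2 : (0:ℝ) < Real.sqrt 2 := by positivity
  have hδpos : 0 < δ := by
    have h2C : (0:ℝ) < 2 * C := by linarith
    have h1 : τ ^ 2 * (2 * C) < Real.sqrt 2 := (lt_div_iff₀ h2C).1 hτsmall
    rw [hδ, ha, sub_pos, ← div_eq_mul_inv, lt_div_iff₀ hτ]
    nlinarith
  -- the integrating factor
  set F : ℝ → ℝ := fun t => a * t - τ * ∫ s in (0:ℝ)..t, g s with hF
  have hFderiv : ∀ x, HasDerivAt F (a - τ * g x) x := by
    intro x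
    have h1 : HasDerivAt (fun t : ℝ => a * t) a x := by
      simpa using (hasDerivAt_id x).const_mul a
    have h2 : HasDerivAt (fun t : ℝ => ∫ s in (0:ℝ)..t, g s) (g x) x :=
      (hg.integral_hasStrictDerivAt 0 x).hasDerivAt
    exact h1.sub ((h2.const_mul τ))
  have hconst : ∀ t, 0 ≤ t → k t * Real.exp (F t) = k 0 := by
    intro t ht
    have key : ∀ x ∈ Set.Icc (0:ℝ) t, k x * Real.exp (F x) = k 0 * Real.exp (F 0) := by
      apply constant_of_has_deriv_right_zero
      · have hFd : Differentiable ℝ F := fun x => (hFderiv x).differentiableAt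
        have hFc : Continuous F := hFd.continuous
        exact ((hk.continuous).mul (Real.continuous_exp.comp hFc)).continuousOn
      · intro x hx
        have hx0 : 0 ≤ x := hx.1
        have hdk : HasDerivAt k (deriv k x) x := (hk x).hasDerivAt
        have hde : HasDerivAt (fun t => Real.exp (F t))
            (Real.exp (F x) * (a - τ * g x)) x := (hFderiv x).exp
        have := hdk.mul hde
        rw [hode x hx0] at this
        have h0 : -(a - τ * g x) * k x * Real.exp (F x)
            + k x * (Real.exp (F x) * (a - τ * g x)) = 0 := by ring
        rw [h0] at this
        exact this.hasDerivWithinAt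
    have := key t ⟨le_refl 0 |>.trans ht, le_refl t⟩
    simpa [hF] using this
  have hbound : ∀ t, 0 ≤ t → |k t| ≤ |k 0| * Real.exp (-δ * t) := by
    intro t ht
    have hkt : k t = k 0 * Real.exp (-(F t)) := by
      have h := hconst t ht
      have : k t * Real.exp (F t) * Real.exp (-(F t)) = k 0 * Real.exp (-(F t)) := by
        rw [h]
      rwa [mul_assoc, ← Real.exp_add, add_neg_cancel, Real.exp_zero, mul_one] at this
    rw [hkt, abs_mul, abs_of_pos (Real.exp_pos _)]
    apply mul_le_mul_of_nonneg_left _ (abs_nonneg _)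
    apply Real.exp_le_exp.2
    have hG := hgint t ht
    have : τ * (∫ s in (0:ℝ)..t, g s) ≤ τ * (C * t) :=
      mul_le_mul_of_nonneg_left hG hτ.le
    rw [hF]
    simp only [hδ]
    nlinarith
  have htend : Tendsto k atTop (nhds 0) := by
    have hb : Tendsto (fun t => |k 0| * Real.exp (-δ * t)) atTop (nhds 0) := by
      have : Tendsto (fun t : ℝ => Real.exp (-δ * t)) atTop (nhds 0) := by
        apply Real.tendsto_exp_atBot.comp
        exact (tendsto_id.const_mul_atTop_of_neg (by linarith)).comp tendsto_id
      simpa using this.const_mul |k 0|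
    rw [tendsto_zero_iff_abs_tendsto_zero]
    apply squeeze_zero' (Eventually.of_forall fun t => abs_nonneg _)
      ((eventually_ge_atTop 0).mono fun t ht => hbound t ht) hb
  refine ⟨hδpos, hbound, htend, ?_⟩
  simpa using htend.const_mul (Real.sqrt 2 * μ * τ)
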